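/- Let m, n be positive integers, let r ≤ s ≤ min(m,n), let A be a complex m×n matrix of rank r with singular values σ_1 ≥ … ≥ σ_r > 0, and let Ã = A + E be a complex m×n matrix of rank s with singular values σ̃_1 ≥ … ≥ σ̃_s > 0. Set H = (AᴴA)^{1/2}, H̃ = (ÃᴴÃ)^{1/2}, F = Σ_{j=1}^r σ_j² + Σ_{j=1}^s σ̃_j², and G = Σ_{j=1}^r σ_j σ̃_j. Then ‖H − H̃‖_F ≥ sqrt( (F − 2G) / (F + 2G) ) · ‖E‖_F. -/

import Mathlib

open scoped BigOperators Matrix ComplexOrder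

noncomputable def frob {m n : ℕ} (A : Matrix (Fin m) (Fin n) ℂ) : ℝ :=
  Real.sqrt (∑ i, ∑ j, ‖A i j‖ ^ 2)

noncomputable def absMat {m n : ℕ} (A : Matrix (Fin m) (Fin n) ℂ) :
    Matrix (Fin n) (Fin n) ℂ :=
  (Matrix.posSemidef_conjTranspose_mul_self A).1.eigenvectorUnitary.1 *
    Matrix.diagonal ((↑) ∘ Real.sqrt ∘ (Matrix.posSemidef_conjTranspose_mul_self A).1.eigenvalues) *
    (star (Matrix.posSemidef_conjTranspose_mul_self A).1.eigenvectorUnitary : Matrix (Fin n) (Fin n) ℂ)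

noncomputable def svdMat (m n r : ℕ) (σ : ℕ → ℝ) : Matrix (Fin m) (Fin n) ℂ :=
  Matrix.of fun i j =>
    if (i : ℕ) = (j : ℕ) ∧ (i : ℕ) < r then ((σ ((i : ℕ) + 1) : ℝ) : ℂ) else 0

/-- `A` admits a singular value decomposition with singular values
`σ 1, …, σ r` (indexed from 1) on the diagonal. -/
def HasSVD {m n : ℕ} (A : Matrix (Fin m) (Fin n) ℂ) (r : ℕ) (σ : ℕ → ℝ) : Prop :=
  ∃ (U : Matrix (Fin m) (Fin m) ℂ) (V : Matrix (Fin n) (Fin n) ℂ),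
    Uᴴ * U = 1 ∧ U * Uᴴ = 1 ∧ Vᴴ * V = 1 ∧ V * Vᴴ = 1 ∧
    A = U * svdMat m n r σ * Vᴴ

/-- `σ 1 ≥ σ 2 ≥ … ≥ σ r > 0`. -/
def SingVals (r : ℕ) (σ : ℕ → ℝ) : Prop :=
  (∀ j, 1 ≤ j → j ≤ r → 0 < σ j) ∧ ∀ j, 1 ≤ j → j < r → σ (j + 1) ≤ σ j

/-- Generalized polar decomposition: `A = Q * |A|`, where `Q` is a rank-`r` partial
isometry such that the column space of `Qᴴ` equals the column space of `|A|`. -/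
def IsPolar {m n : ℕ} (A Q : Matrix (Fin m) (Fin n) ℂ) (r : ℕ) : Prop :=
  A = Q * absMat A ∧ Q * Qᴴ * Q = Q ∧ Q.rank = r ∧
    LinearMap.range (Matrix.mulVecLin Qᴴ) =
      LinearMap.range (Matrix.mulVecLin (absMat A))

open Finset Matrix Complex

lemma count_le {N K : ℕ} (hK : K < N) :
    ∑ t ∈ range N, (if t ≤ K then (1:ℝ) else 0) = (K + 1 : ℕ) := by
  rw [← Finset.sum_filter]
  have : (range N).filter (fun t => t ≤ K) = range (K+1) := by
    ext t; simp [Nat.lt_succ_iff]; omega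
  simp [this]

lemma lemA (N : ℕ) (a b : ℕ → ℝ)
    (ha0 : ∀ k, 0 ≤ a k) (hb0 : ∀ k, 0 ≤ b k)
    (ha : ∀ k, a (k+1) ≤ a k) (hb : ∀ k, b (k+1) ≤ b k)
    (haN : a N = 0) (hbN : b N = 0)
    (P : ℕ → ℕ → ℝ) (hP : ∀ i j, 0 ≤ P i j)
    (hrow : ∀ i, i < N → ∑ j ∈ range N, P i j ≤ 1)
    (hcol : ∀ j, j < N → ∑ i ∈ range N, P i j ≤ 1) :
    ∑ i ∈ range N, ∑ j ∈ range N, a i * b j * P i j ≤ ∑ k ∈ range N, a k * b k := by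
  set d : ℕ → ℝ := fun k => a k - a (k+1) with hd
  set e : ℕ → ℝ := fun k => b k - b (k+1) with he
  have hd0 : ∀ k, 0 ≤ d k := fun k => sub_nonneg.2 (ha k)
  have he0 : ∀ k, 0 ≤ e k := fun k => sub_nonneg.2 (hb k)
  have hrep : ∀ (c : ℕ → ℝ), c N = 0 → ∀ i < N,
      c i = ∑ k ∈ range N, (if i ≤ k then (1:ℝ) else 0) * (c k - c (k+1)) := by
    intro c hcN i hi
    simp_rw [boole_mul]
    rw [← Finset.sum_filter]
    have hf : (range N).filter (fun k => i ≤ k) = Finset.Ico i N := by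
      ext t; simp [Finset.mem_Ico]; omega
    rw [hf, Finset.sum_Ico_eq_sum_range]
    have : ∀ t, c (i + t) - c (i + t + 1) = (fun t => c (i+t)) t - (fun t => c (i+t)) (t+1) := by
      intro t; simp [Nat.add_assoc]
    simp_rw [this]
    rw [Finset.sum_range_sub' (fun t => c (i+t))]
    simp [Nat.add_sub_cancel' hi.le, hcN]
  have hmin : ∀ k l, k < N → l < N →
      ∑ p ∈ Finset.range N ×ˢ Finset.range N,
        ((if p.1 ≤ k then (1:ℝ) else 0) * (if p.2 ≤ l then (1:ℝ) else 0) * P p.1 p.2)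
      ≤ ∑ t ∈ range N, (if t ≤ k then (1:ℝ) else 0) * (if t ≤ l then (1:ℝ) else 0) := by
    intro k l hk hl
    have hT : ∑ p ∈ Finset.range N ×ˢ Finset.range N,
        ((if p.1 ≤ k then (1:ℝ) else 0) * (if p.2 ≤ l then (1:ℝ) else 0) * P p.1 p.2)
        = ∑ i ∈ range N, ∑ j ∈ range N,
          ((if i ≤ k then (1:ℝ) else 0) * (if j ≤ l then (1:ℝ) else 0) * P i j) := by
      rw [Finset.sum_product]
    have hcnt : ∀ t, (if t ≤ k then (1:ℝ) else 0) * (if t ≤ l then (1:ℝ) else 0)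
        = if t ≤ min k l then (1:ℝ) else 0 := by
      intro t; by_cases h1 : t ≤ k <;> by_cases h2 : t ≤ l <;>
        simp [h1, h2, le_min_iff]
    have hRHS : ∑ t ∈ range N, (if t ≤ k then (1:ℝ) else 0) * (if t ≤ l then (1:ℝ) else 0)
        = (min k l + 1 : ℕ) := by
      simp_rw [hcnt]
      simpa using count_le (lt_of_le_of_lt (min_le_left k l) hk)
    rw [hT, hRHS]
    rcases le_total k l with hkl|hkl
    · -- min = k, bound by k+1 via rows
      have : ∀ i ∈ range N, (if i ≤ k then (1:ℝ) else 0) * (∑ j ∈ range N, (if j ≤ l then (1:ℝ) else 0) * P i j) ≤ (if i ≤ k then (1:ℝ) else 0) := by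
        intro i hi
        rcases le_or_gt i k with h|h
        · simp only [h, if_true, one_mul]
          calc ∑ j ∈ range N, (if j ≤ l then (1:ℝ) else 0) * P i j
              ≤ ∑ j ∈ range N, P i j := by
                apply Finset.sum_le_sum; intro j hj
                by_cases h2 : j ≤ l <;> simp [h2, hP i j]
            _ ≤ 1 := hrow i (mem_range.1 hi)
        · simp [Nat.not_le.2 h]
      calc ∑ i ∈ range N, ∑ j ∈ range N,
            ((if i ≤ k then (1:ℝ) else 0) * (if j ≤ l then (1:ℝ) else 0) * P i j)
          = ∑ i ∈ range N, (if i ≤ k then (1:ℝ) else 0) * (∑ j ∈ range N, (if j ≤ l then (1:ℝ) else 0) * P i j) := by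
            apply Finset.sum_congr rfl; intro i _
            rw [Finset.mul_sum]; apply Finset.sum_congr rfl; intro j _; ring
        _ ≤ ∑ i ∈ range N, (if i ≤ k then (1:ℝ) else 0) := Finset.sum_le_sum this
        _ = (k+1:ℕ) := count_le hk
        _ = ((min k l + 1 : ℕ):ℝ) := by rw [min_eq_left hkl]
    · -- min = l, bound by l+1 via cols
      have hsw : ∑ i ∈ range N, ∑ j ∈ range N,
            ((if i ≤ k then (1:ℝ) else 0) * (if j ≤ l then (1:ℝ) else 0) * P i j)
          = ∑ j ∈ range N, ∑ i ∈ range N,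
            ((if i ≤ k then (1:ℝ) else 0) * (if j ≤ l then (1:ℝ) else 0) * P i j) :=
        Finset.sum_comm
      rw [hsw]
      have : ∀ j ∈ range N, (if j ≤ l then (1:ℝ) else 0) * (∑ i ∈ range N, (if i ≤ k then (1:ℝ) else 0) * P i j) ≤ (if j ≤ l then (1:ℝ) else 0) := by
        intro j hj
        rcases le_or_gt j l with h|h
        · simp only [h, if_true, one_mul]
          calc ∑ i ∈ range N, (if i ≤ k then (1:ℝ) else 0) * P i j
              ≤ ∑ i ∈ range N, P i j := by
                apply Finset.sum_le_sum; intro i hi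
                by_cases h2 : i ≤ k <;> simp [h2, hP i j]
            _ ≤ 1 := hcol j (mem_range.1 hj)
        · simp [Nat.not_le.2 h]
      calc ∑ j ∈ range N, ∑ i ∈ range N,
            ((if i ≤ k then (1:ℝ) else 0) * (if j ≤ l then (1:ℝ) else 0) * P i j)
          = ∑ j ∈ range N, (if j ≤ l then (1:ℝ) else 0) * (∑ i ∈ range N, (if i ≤ k then (1:ℝ) else 0) * P i j) := by
            apply Finset.sum_congr rfl; intro j _
            rw [Finset.mul_sum]; apply Finset.sum_congr rfl; intro i _; ring
        _ ≤ ∑ j ∈ range N, (if j ≤ l then (1:ℝ) else 0) := Finset.sum_le_sum this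
        _ = (l+1:ℕ) := count_le hl
        _ = ((min k l + 1 : ℕ):ℝ) := by rw [min_eq_right hkl]
  calc ∑ i ∈ range N, ∑ j ∈ range N, a i * b j * P i j
      = ∑ p ∈ Finset.range N ×ˢ Finset.range N, a p.1 * b p.2 * P p.1 p.2 := by
        rw [Finset.sum_product]
    _ = ∑ p ∈ Finset.range N ×ˢ Finset.range N,
          ∑ q ∈ Finset.range N ×ˢ Finset.range N,
            d q.1 * e q.2 * ((if p.1 ≤ q.1 then (1:ℝ) else 0) * (if p.2 ≤ q.2 then (1:ℝ) else 0) * P p.1 p.2) := by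
        apply Finset.sum_congr rfl; intro p hp
        rw [Finset.mem_product, Finset.mem_range, Finset.mem_range] at hp
        rw [hrep a haN p.1 hp.1, hrep b hbN p.2 hp.2, Finset.sum_product]
        rw [Finset.sum_mul_sum, Finset.sum_mul]
        apply Finset.sum_congr rfl; intro x hx
        rw [Finset.sum_mul]
        apply Finset.sum_congr rfl; intro y hy
        dsimp only
        ring
    _ = ∑ q ∈ Finset.range N ×ˢ Finset.range N,
          d q.1 * e q.2 * ∑ p ∈ Finset.range N ×ˢ Finset.range N,
            ((if p.1 ≤ q.1 then (1:ℝ) else 0) * (if p.2 ≤ q.2 then (1:ℝ) else 0) * P p.1 p.2) := by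
        rw [Finset.sum_comm]
        apply Finset.sum_congr rfl; intro q hq
        rw [Finset.mul_sum]
    _ ≤ ∑ q ∈ Finset.range N ×ˢ Finset.range N,
          d q.1 * e q.2 * ∑ t ∈ range N, ((if t ≤ q.1 then (1:ℝ) else 0) * (if t ≤ q.2 then (1:ℝ) else 0)) := by
        apply Finset.sum_le_sum; intro q hq
        rw [Finset.mem_product, Finset.mem_range, Finset.mem_range] at hq
        exact mul_le_mul_of_nonneg_left (hmin q.1 q.2 hq.1 hq.2)
          (mul_nonneg (hd0 q.1) (he0 q.2))
    _ = ∑ t ∈ range N, ∑ q ∈ Finset.range N ×ˢ Finset.range N,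
          ((if t ≤ q.1 then (1:ℝ) else 0) * d q.1) * ((if t ≤ q.2 then (1:ℝ) else 0) * e q.2) := by
        rw [Finset.sum_comm]
        apply Finset.sum_congr rfl; intro q hq
        rw [Finset.mul_sum]; apply Finset.sum_congr rfl; intro t _; ring
    _ = ∑ t ∈ range N, a t * b t := by
        apply Finset.sum_congr rfl; intro t ht
        rw [Finset.sum_product]
        dsimp only
        rw [← Finset.sum_mul_sum (range N) (range N) (fun x => (if t ≤ x then (1:ℝ) else 0) * d x)
          (fun y => (if t ≤ y then (1:ℝ) else 0) * e y)]
        rw [← hrep a haN t (mem_range.1 ht), ← hrep b hbN t (mem_range.1 ht)]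

lemma pt_norm (x y : ℂ) : ‖x - y‖^2 = ‖x‖^2 + ‖y‖^2 - 2 * ((starRingEnd ℂ) x * y).re := by
  simp only [← Complex.normSq_eq_norm_sq, Complex.normSq_apply,
    Complex.sub_re, Complex.sub_im, Complex.mul_re, Complex.conj_re, Complex.conj_im]
  ring

lemma pt_norm_self (x : ℂ) : (((starRingEnd ℂ) x) * x).re = ‖x‖^2 := by
  simp only [← Complex.normSq_eq_norm_sq, Complex.normSq_apply,
    Complex.mul_re, Complex.conj_re, Complex.conj_im]
  ring

lemma trace_conj_mul {m n : ℕ} (X Y : Matrix (Fin m) (Fin n) ℂ) :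
    (Matrix.trace (Xᴴ * Y)).re = ∑ j, ∑ i, ((starRingEnd ℂ) (X i j) * Y i j).re := by
  rw [Matrix.trace]
  rw [Complex.re_sum]
  apply Finset.sum_congr rfl; intro j _
  rw [Matrix.diag_apply, Matrix.mul_apply, Complex.re_sum]
  apply Finset.sum_congr rfl; intro i _
  rw [Matrix.conjTranspose_apply]
  rfl

lemma sumSq_eq_trace {m n : ℕ} (X : Matrix (Fin m) (Fin n) ℂ) :
    (Matrix.trace (Xᴴ * X)).re = ∑ i, ∑ j, ‖X i j‖^2 := by
  rw [trace_conj_mul, Finset.sum_comm]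
  exact Finset.sum_congr rfl fun i _ => Finset.sum_congr rfl fun j _ => pt_norm_self _

lemma sumSq_sub {m n : ℕ} (X Y : Matrix (Fin m) (Fin n) ℂ) :
    ∑ i, ∑ j, ‖(X - Y) i j‖^2 =
      (∑ i, ∑ j, ‖X i j‖^2) + (∑ i, ∑ j, ‖Y i j‖^2) - 2 * (Matrix.trace (Xᴴ * Y)).re := by
  rw [trace_conj_mul, Finset.sum_comm (γ := Fin n)]
  rw [Finset.mul_sum, ← Finset.sum_add_distrib, ← Finset.sum_sub_distrib]
  apply Finset.sum_congr rfl; intro i _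
  rw [Finset.mul_sum, ← Finset.sum_add_distrib, ← Finset.sum_sub_distrib]
  apply Finset.sum_congr rfl; intro j _
  simp only [Matrix.sub_apply]
  rw [pt_norm]


noncomputable def pad (r : ℕ) (σ : ℕ → ℝ) : ℕ → ℝ := fun k => if k < r then σ (k+1) else 0

noncomputable def natEmb {d : ℕ} (W : Matrix (Fin d) (Fin d) ℂ) : ℕ → ℕ → ℂ :=
  fun i j => if h : i < d ∧ j < d then W ⟨i, h.1⟩ ⟨j, h.2⟩ else 0

lemma svd_col_collapse {m n r : ℕ} (hrm : r ≤ m) (σ : ℕ → ℝ) (p : Fin n) (f : Fin m → ℂ) :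
    ∑ i, (starRingEnd ℂ) (svdMat m n r σ i p) * f i
      = (pad r σ ↑p : ℂ) * (if hp : (p:ℕ) < m then f ⟨p, hp⟩ else 0) := by
  by_cases hp : (p:ℕ) < r
  · have hpm : (p:ℕ) < m := lt_of_lt_of_le hp hrm
    rw [dif_pos hpm]
    rw [Finset.sum_eq_single (⟨p, hpm⟩ : Fin m)]
    · simp [svdMat, hp, pad]
    · intro i _ hne
      have : (i:ℕ) ≠ (p:ℕ) := fun h => hne (Fin.ext h)
      simp [svdMat, this]
    · simp
  · have hz : ∀ i : Fin m, i ∈ Finset.univ → (starRingEnd ℂ) (svdMat m n r σ i p) * f i = 0 := by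
      intro i _
      have : ¬((i:ℕ) = (p:ℕ) ∧ (i:ℕ) < r) := by rintro ⟨h1, h2⟩; exact hp (h1 ▸ h2)
      simp [svdMat, this]
    rw [Finset.sum_eq_zero hz]
    simp [pad, hp]

lemma svd_row_collapse {m n s : ℕ} (hsm : s ≤ m) (τ : ℕ → ℝ) (q : Fin n) (g : Fin m → ℂ) :
    ∑ j, g j * svdMat m n s τ j q
      = (pad s τ ↑q : ℂ) * (if hq : (q:ℕ) < m then g ⟨q, hq⟩ else 0) := by
  by_cases hq : (q:ℕ) < s
  · have hqm : (q:ℕ) < m := lt_of_lt_of_le hq hsm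
    rw [dif_pos hqm]
    rw [Finset.sum_eq_single (⟨q, hqm⟩ : Fin m)]
    · simp [svdMat, hq, pad]; ring
    · intro j _ hne
      have : (j:ℕ) ≠ (q:ℕ) := fun h => hne (Fin.ext h)
      simp [svdMat, this]
    · simp
  · have hz : ∀ j : Fin m, j ∈ Finset.univ → g j * svdMat m n s τ j q = 0 := by
      intro j _
      have : ¬((j:ℕ) = (q:ℕ) ∧ (j:ℕ) < s) := by rintro ⟨h1, h2⟩; exact hq (h1 ▸ h2)
      simp [svdMat, this]
    rw [Finset.sum_eq_zero hz]
    simp [pad, hq]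

lemma trace_SWSZ {m n r s : ℕ} (hrm : r ≤ m) (hsm : s ≤ m) (σ τ : ℕ → ℝ)
    (W : Matrix (Fin m) (Fin m) ℂ) (Z : Matrix (Fin n) (Fin n) ℂ) :
    Matrix.trace ((svdMat m n r σ)ᴴ * W * svdMat m n s τ * Zᴴ)
      = ∑ p : Fin n, ∑ q : Fin n,
          ((pad r σ ↑p : ℝ) : ℂ) * ((pad s τ ↑q : ℝ) : ℂ) *
            (natEmb W ↑p ↑q * (starRingEnd ℂ) (Z p q)) := by
  have hPQ : ∀ p q : Fin n, ((svdMat m n r σ)ᴴ * W * svdMat m n s τ) p q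
      = ((pad r σ ↑p : ℝ) : ℂ) * ((pad s τ ↑q : ℝ) : ℂ) * natEmb W ↑p ↑q := by
    intro p q
    rw [Matrix.mul_apply]
    rw [svd_row_collapse hsm τ q (fun j => ((svdMat m n r σ)ᴴ * W) p j)]
    have h1 : ∀ j : Fin m, ((svdMat m n r σ)ᴴ * W) p j
        = ((pad r σ ↑p : ℝ) : ℂ) * (if hp : (p:ℕ) < m then W ⟨p, hp⟩ j else 0) := by
      intro j
      rw [Matrix.mul_apply]
      simp_rw [Matrix.conjTranspose_apply]
      exact svd_col_collapse hrm σ p (fun i => W i j)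
    by_cases hq : (q:ℕ) < m
    · rw [dif_pos hq, h1]
      by_cases hp : (p:ℕ) < m
      · rw [dif_pos hp]
        have : natEmb W ↑p ↑q = W ⟨p, hp⟩ ⟨q, hq⟩ := by simp [natEmb, hp, hq]
        rw [this]; ring
      · rw [dif_neg hp]
        have : natEmb W ↑p ↑q = 0 := by simp [natEmb, hp]
        rw [this]; ring
    · rw [dif_neg hq]
      have : natEmb W ↑p ↑q = 0 := by simp [natEmb, hq]
      rw [this]; ring
  rw [Matrix.trace]
  apply Finset.sum_congr rfl; intro p _
  rw [Matrix.diag_apply, Matrix.mul_apply]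
  apply Finset.sum_congr rfl; intro q _
  rw [hPQ, Matrix.conjTranspose_apply, starRingEnd_apply]
  ring

lemma pt2 (x y : ℝ) (z : ℂ) : ((x:ℂ) * z * (y:ℂ) * (starRingEnd ℂ) z).re = x * y * ‖z‖^2 := by
  have h : (x:ℂ) * z * (y:ℂ) * (starRingEnd ℂ) z = ((x*y : ℝ):ℂ) * (z * (starRingEnd ℂ) z) := by
    push_cast; ring
  rw [h, Complex.mul_conj, ← Complex.ofReal_mul, Complex.ofReal_re, Complex.normSq_eq_norm_sq]

lemma trace_DMD {n : ℕ} (a b : ℕ → ℝ) (M : Matrix (Fin n) (Fin n) ℂ) :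
    (Matrix.trace (Matrix.diagonal (fun p : Fin n => ((a ↑p : ℝ) : ℂ)) * M *
        Matrix.diagonal (fun q : Fin n => ((b ↑q : ℝ) : ℂ)) * Mᴴ)).re
      = ∑ p : Fin n, ∑ q : Fin n, a ↑p * b ↑q * ‖M p q‖^2 := by
  rw [Matrix.trace, Complex.re_sum]
  apply Finset.sum_congr rfl; intro p _
  rw [Matrix.diag_apply, Matrix.mul_apply, Complex.re_sum]
  apply Finset.sum_congr rfl; intro q _
  rw [Matrix.mul_diagonal, Matrix.diagonal_mul, Matrix.conjTranspose_apply]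
  exact pt2 _ _ _


lemma pt_norm_self' (x : ℂ) : (x * (starRingEnd ℂ) x).re = ‖x‖^2 := by
  rw [Complex.mul_conj, Complex.normSq_eq_norm_sq, Complex.ofReal_re]

lemma row_sum_one {d : ℕ} (W : Matrix (Fin d) (Fin d) ℂ) (hW : W * Wᴴ = 1) (x : Fin d) :
    ∑ j : Fin d, ‖W x j‖^2 = 1 := by
  have h1 : (W * Wᴴ) x x = 1 := by rw [hW, Matrix.one_apply_eq]
  have h2 : (W * Wᴴ) x x = ∑ j, W x j * (starRingEnd ℂ) (W x j) := by
    rw [Matrix.mul_apply]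
    exact Finset.sum_congr rfl fun j _ => by rw [Matrix.conjTranspose_apply, starRingEnd_apply]
  have h3 := congrArg Complex.re (h2.symm.trans h1)
  rw [Complex.re_sum, Complex.one_re] at h3
  rw [← h3]
  exact Finset.sum_congr rfl fun j _ => (pt_norm_self' _).symm

lemma natEmb_row_sum {d : ℕ} (W : Matrix (Fin d) (Fin d) ℂ) (hW : W * Wᴴ = 1) (i N : ℕ) :
    ∑ j ∈ Finset.range N, ‖natEmb W i j‖^2 ≤ 1 := by
  by_cases hi : i < d
  · calc ∑ j ∈ Finset.range N, ‖natEmb W i j‖^2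
        ≤ ∑ j ∈ Finset.range (max N d), ‖natEmb W i j‖^2 := by
          apply Finset.sum_le_sum_of_subset_of_nonneg
          · exact Finset.range_subset_range.2 (le_max_left _ _)
          · intro j _ _; positivity
      _ = ∑ j ∈ Finset.range d, ‖natEmb W i j‖^2 := by
          symm
          apply Finset.sum_subset (Finset.range_subset_range.2 (le_max_right _ _))
          intro j _ hj
          rw [Finset.mem_range] at hj
          simp [natEmb, hj]
      _ = ∑ j : Fin d, ‖natEmb W i ↑j‖^2 := (Fin.sum_univ_eq_sum_range (fun k => ‖natEmb W i k‖^2) d).symm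
      _ = ∑ j : Fin d, ‖W ⟨i, hi⟩ j‖^2 := by
          apply Finset.sum_congr rfl; intro j _
          congr 1
          simp [natEmb, hi]
      _ = 1 := row_sum_one W hW _
  · simp [natEmb, hi]

lemma col_sum_one {d : ℕ} (W : Matrix (Fin d) (Fin d) ℂ) (hW : Wᴴ * W = 1) (x : Fin d) :
    ∑ i : Fin d, ‖W i x‖^2 = 1 := by
  have h1 : (Wᴴ * W) x x = 1 := by rw [hW, Matrix.one_apply_eq]
  have h2 : (Wᴴ * W) x x = ∑ i, (starRingEnd ℂ) (W i x) * W i x := by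
    rw [Matrix.mul_apply]
    exact Finset.sum_congr rfl fun i _ => by rw [Matrix.conjTranspose_apply, starRingEnd_apply]
  have h3 := congrArg Complex.re (h2.symm.trans h1)
  rw [Complex.re_sum, Complex.one_re] at h3
  rw [← h3]
  apply Finset.sum_congr rfl; intro i _
  rw [mul_comm, pt_norm_self']

lemma natEmb_col_sum {d : ℕ} (W : Matrix (Fin d) (Fin d) ℂ) (hW : Wᴴ * W = 1) (j N : ℕ) :
    ∑ i ∈ Finset.range N, ‖natEmb W i j‖^2 ≤ 1 := by
  by_cases hj : j < d
  · calc ∑ i ∈ Finset.range N, ‖natEmb W i j‖^2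
        ≤ ∑ i ∈ Finset.range (max N d), ‖natEmb W i j‖^2 := by
          apply Finset.sum_le_sum_of_subset_of_nonneg
          · exact Finset.range_subset_range.2 (le_max_left _ _)
          · intro i _ _; positivity
      _ = ∑ i ∈ Finset.range d, ‖natEmb W i j‖^2 := by
          symm
          apply Finset.sum_subset (Finset.range_subset_range.2 (le_max_right _ _))
          intro i _ hi
          rw [Finset.mem_range] at hi
          simp [natEmb, hi]
      _ = ∑ i : Fin d, ‖natEmb W ↑i j‖^2 := (Fin.sum_univ_eq_sum_range (fun k => ‖natEmb W k j‖^2) d).symm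
      _ = ∑ i : Fin d, ‖W i ⟨j, hj⟩‖^2 := by
          apply Finset.sum_congr rfl; intro i _
          congr 1
          simp [natEmb, hj]
      _ = 1 := col_sum_one W hW _
  · simp [natEmb, hj]

section Part5
open Finset Matrix Complex

open scoped MatrixOrder in
lemma absMat_eq_sqrt {m n : ℕ} (A : Matrix (Fin m) (Fin n) ℂ) :
    absMat A = CFC.sqrt (Aᴴ * A) := by
  have h0 : 0 ≤ Aᴴ * A := (Matrix.posSemidef_conjTranspose_mul_self A).nonneg
  rw [CFC.sqrt_eq_real_sqrt _ h0, cfcₙ_eq_cfc, (Matrix.posSemidef_conjTranspose_mul_self A).1.cfc_eq]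
  simp only [absMat, Matrix.IsHermitian.cfc, Unitary.conjStarAlgAut_apply]
  rfl

open scoped MatrixOrder in
lemma absMat_herm {m n : ℕ} (A : Matrix (Fin m) (Fin n) ℂ) : (absMat A)ᴴ = absMat A := by
  rw [absMat_eq_sqrt]
  exact (CFC.sqrt_nonneg _).posSemidef.1

lemma svd_sq {m n r : ℕ} (hrm : r ≤ m) (σ : ℕ → ℝ) :
    (svdMat m n r σ)ᴴ * svdMat m n r σ
      = Matrix.diagonal (fun p : Fin n => (((pad r σ ↑p : ℝ) : ℂ))^2) := by
  ext p q
  rw [Matrix.mul_apply]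
  simp_rw [Matrix.conjTranspose_apply, ← starRingEnd_apply]
  rw [svd_col_collapse hrm σ p (fun i => svdMat m n r σ i q)]
  by_cases hpq : p = q
  · subst hpq
    rw [Matrix.diagonal_apply_eq]
    by_cases hp : (p:ℕ) < r
    · have hpm : (p:ℕ) < m := lt_of_lt_of_le hp hrm
      rw [dif_pos hpm]
      simp [svdMat, pad, hp]
      ring
    · rw [pad]
      simp only [hp, if_false]
      by_cases hpm : (p:ℕ) < m
      · rw [dif_pos hpm]; simp [svdMat, hp]
      · rw [dif_neg hpm]; simp
  · rw [Matrix.diagonal_apply_ne _ hpq]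
    by_cases hpm : (p:ℕ) < m
    · rw [dif_pos hpm]
      have : ((⟨(p:ℕ), hpm⟩ : Fin m) : ℕ) ≠ (q:ℕ) := by
        simpa using fun h => hpq (Fin.ext h)
      simp [svdMat, this]
    · rw [dif_neg hpm]; simp

lemma conj_form {m n r : ℕ} (hrm : r ≤ m) (σ : ℕ → ℝ)
    (A : Matrix (Fin m) (Fin n) ℂ) (U : Matrix (Fin m) (Fin m) ℂ)
    (V : Matrix (Fin n) (Fin n) ℂ) (hU : Uᴴ * U = 1)
    (hA : A = U * svdMat m n r σ * Vᴴ) :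
    Aᴴ * A = V * Matrix.diagonal (fun p : Fin n => (((pad r σ ↑p : ℝ) : ℂ))^2) * Vᴴ := by
  rw [← svd_sq hrm σ, hA]
  simp only [Matrix.conjTranspose_mul, Matrix.conjTranspose_conjTranspose, Matrix.mul_assoc]
  rw [← Matrix.mul_assoc Uᴴ U, hU, Matrix.one_mul]

lemma absMat_eq {m n r : ℕ} (hrm : r ≤ m) (σ : ℕ → ℝ) (hσ0 : ∀ k, 0 ≤ pad r σ k)
    (A : Matrix (Fin m) (Fin n) ℂ) (U : Matrix (Fin m) (Fin m) ℂ)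
    (V : Matrix (Fin n) (Fin n) ℂ) (hU : Uᴴ * U = 1) (hV : Vᴴ * V = 1)
    (hA : A = U * svdMat m n r σ * Vᴴ) :
    absMat A = V * Matrix.diagonal (fun p : Fin n => ((pad r σ ↑p : ℝ) : ℂ)) * Vᴴ := by
  symm
  have hD : Matrix.PosSemidef (Matrix.diagonal fun p : Fin n => ((pad r σ ↑p : ℝ) : ℂ)) := by
    rw [Matrix.posSemidef_diagonal_iff]
    intro i
    simpa using hσ0 (i : ℕ)
  have hPSD := hD.mul_mul_conjTranspose_same V
  rw [absMat_eq_sqrt]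
  open scoped MatrixOrder in
  refine (CFC.sqrt_unique (Eq.trans (pow_two _).symm ?_) hPSD.nonneg).symm
  rw [pow_two, conj_form hrm σ A U V hU hA]
  simp only [Matrix.mul_assoc]
  rw [← Matrix.mul_assoc Vᴴ V, hV, Matrix.one_mul]
  congr 1
  rw [← Matrix.mul_assoc, Matrix.diagonal_mul_diagonal]
  congr 1
  funext p
  ring

lemma sumSq_absMat {m n : ℕ} (A : Matrix (Fin m) (Fin n) ℂ) :
    ∑ i, ∑ j, ‖absMat A i j‖^2 = (Matrix.trace (Aᴴ * A)).re := by
  open scoped MatrixOrder in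
  have h := CFC.sqrt_mul_sqrt_self (Aᴴ * A) (Matrix.posSemidef_conjTranspose_mul_self A).nonneg
  have hHerm : (absMat A)ᴴ = absMat A :=
    absMat_herm A
  rw [← sumSq_eq_trace, hHerm]
  rw [absMat_eq_sqrt]
  rw [h]

lemma trace_conj_re {m n r : ℕ} (hrm : r ≤ m) (hrn : r ≤ n) (σ : ℕ → ℝ)
    (A : Matrix (Fin m) (Fin n) ℂ) (U : Matrix (Fin m) (Fin m) ℂ)
    (V : Matrix (Fin n) (Fin n) ℂ) (hU : Uᴴ * U = 1) (hV : Vᴴ * V = 1)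
    (hA : A = U * svdMat m n r σ * Vᴴ) :
    (Matrix.trace (Aᴴ * A)).re = ∑ k ∈ Finset.range n, (pad r σ k)^2 := by
  rw [conj_form hrm σ A U V hU hA]
  rw [Matrix.trace_mul_comm, ← Matrix.mul_assoc, hV, Matrix.one_mul, Matrix.trace_diagonal]
  rw [Complex.re_sum]
  rw [← Fin.sum_univ_eq_sum_range (fun k => (pad r σ k)^2) n]
  apply Finset.sum_congr rfl; intro p _
  rw [← Complex.ofReal_pow, Complex.ofReal_re]

end Part5
section Part6
open Finset Matrix Complex

lemma re_mul_conj_lb (u v : ℂ) : -((‖u‖^2 + ‖v‖^2)/2) ≤ (u * (starRingEnd ℂ) v).re := by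
  have h1 : |(u * (starRingEnd ℂ) v).re| ≤ ‖u * (starRingEnd ℂ) v‖ := by
    exact Complex.abs_re_le_norm _
  have h2 : ‖u * (starRingEnd ℂ) v‖ = ‖u‖ * ‖v‖ := by
    rw [norm_mul, RingHomIsometric.norm_map]
  nlinarith [neg_abs_le (u * (starRingEnd ℂ) v).re, sq_nonneg (‖u‖ - ‖v‖)]

lemma natEmb_diag {n : ℕ} (Z : Matrix (Fin n) (Fin n) ℂ) (p q : Fin n) :
    natEmb Z ↑p ↑q = Z p q := by
  simp [natEmb]

lemma fin_double_sum (n : ℕ) (f : ℕ → ℕ → ℝ) :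
    ∑ p : Fin n, ∑ q : Fin n, f ↑p ↑q = ∑ i ∈ Finset.range n, ∑ j ∈ Finset.range n, f i j := by
  rw [← Fin.sum_univ_eq_sum_range (fun i => ∑ j ∈ Finset.range n, f i j) n]
  exact Finset.sum_congr rfl fun p _ => (Fin.sum_univ_eq_sum_range (f ↑p) n)

lemma cross_trace_lb {m n r s : ℕ} (hrm : r ≤ m) (hsm : s ≤ m) (hrn : r ≤ n) (hsn : s ≤ n)
    (σ τ : ℕ → ℝ)
    (ha0 : ∀ k, 0 ≤ pad r σ k) (ha1 : ∀ k, pad r σ (k+1) ≤ pad r σ k)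
    (hb0 : ∀ k, 0 ≤ pad s τ k) (hb1 : ∀ k, pad s τ (k+1) ≤ pad s τ k)
    (W : Matrix (Fin m) (Fin m) ℂ) (Z : Matrix (Fin n) (Fin n) ℂ)
    (hW1 : W * Wᴴ = 1) (hW2 : Wᴴ * W = 1) (hZ1 : Z * Zᴴ = 1) (hZ2 : Zᴴ * Z = 1) :
    -(∑ k ∈ Finset.range n, pad r σ k * pad s τ k)
      ≤ (Matrix.trace ((svdMat m n r σ)ᴴ * W * svdMat m n s τ * Zᴴ)).re := by
  have han : pad r σ n = 0 := by simp [pad, Nat.not_lt.2 hrn]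
  have hbn : pad s τ n = 0 := by simp [pad, Nat.not_lt.2 hsn]
  set P : ℕ → ℕ → ℝ := fun i j => (‖natEmb W i j‖^2 + ‖natEmb Z i j‖^2)/2 with hPdef
  have hP0 : ∀ i j, 0 ≤ P i j := by intro i j; positivity
  have hrow : ∀ i, i < n → ∑ j ∈ Finset.range n, P i j ≤ 1 := by
    intro i _
    rw [hPdef]
    simp only
    rw [← Finset.sum_div, Finset.sum_add_distrib]
    have h1 := natEmb_row_sum W hW1 i n
    have h2 := natEmb_row_sum Z hZ1 i n
    linarith
  have hcol : ∀ j, j < n → ∑ i ∈ Finset.range n, P i j ≤ 1 := by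
    intro j _
    rw [hPdef]
    simp only
    rw [← Finset.sum_div, Finset.sum_add_distrib]
    have h1 := natEmb_col_sum W hW2 j n
    have h2 := natEmb_col_sum Z hZ2 j n
    linarith
  have hlemA := lemA n (pad r σ) (pad s τ) ha0 hb0 ha1 hb1 han hbn P hP0 hrow hcol
  rw [trace_SWSZ hrm hsm σ τ W Z, Complex.re_sum]
  simp_rw [Complex.re_sum]
  have hterm : ∀ p q : Fin n,
      (((pad r σ (p:ℕ) : ℝ):ℂ) * ((pad s τ (q:ℕ) : ℝ):ℂ) *
        (natEmb W ↑p ↑q * (starRingEnd ℂ) (Z p q))).re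
      = pad r σ ↑p * (pad s τ ↑q *
          (natEmb W ↑p ↑q * (starRingEnd ℂ) (natEmb Z ↑p ↑q)).re) := by
    intro p q
    rw [natEmb_diag Z p q, mul_assoc, Complex.re_ofReal_mul, Complex.re_ofReal_mul]
  simp_rw [hterm]
  rw [fin_double_sum n (fun i j => pad r σ i * (pad s τ j *
        (natEmb W i j * (starRingEnd ℂ) (natEmb Z i j)).re))]
  have hstep : ∀ i ∈ Finset.range n, ∀ j ∈ Finset.range n,
      -(pad r σ i * pad s τ j * P i j)
        ≤ pad r σ i * (pad s τ j * (natEmb W i j * (starRingEnd ℂ) (natEmb Z i j)).re) := by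
    intro i _ j _
    have h1 := re_mul_conj_lb (natEmb W i j) (natEmb Z i j)
    calc -(pad r σ i * pad s τ j * P i j)
        = pad r σ i * (pad s τ j * -(P i j)) := by ring
      _ ≤ pad r σ i * (pad s τ j * (natEmb W i j * (starRingEnd ℂ) (natEmb Z i j)).re) := by
          apply mul_le_mul_of_nonneg_left _ (ha0 i)
          apply mul_le_mul_of_nonneg_left _ (hb0 j)
          exact h1
  calc -(∑ k ∈ Finset.range n, pad r σ k * pad s τ k)
      ≤ -(∑ i ∈ Finset.range n, ∑ j ∈ Finset.range n, pad r σ i * pad s τ j * P i j) := by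
        exact neg_le_neg hlemA
    _ = ∑ i ∈ Finset.range n, ∑ j ∈ Finset.range n, -(pad r σ i * pad s τ j * P i j) := by
        rw [← Finset.sum_neg_distrib]
        exact Finset.sum_congr rfl fun i _ => by rw [Finset.sum_neg_distrib]
    _ ≤ _ := by
        apply Finset.sum_le_sum
        intro i hi
        exact Finset.sum_le_sum (hstep i hi)

lemma herm_trace_ub {n r s : ℕ} (hrn : r ≤ n) (hsn : s ≤ n) (σ τ : ℕ → ℝ)
    (ha0 : ∀ k, 0 ≤ pad r σ k) (ha1 : ∀ k, pad r σ (k+1) ≤ pad r σ k)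
    (hb0 : ∀ k, 0 ≤ pad s τ k) (hb1 : ∀ k, pad s τ (k+1) ≤ pad s τ k)
    (M : Matrix (Fin n) (Fin n) ℂ) (hM1 : M * Mᴴ = 1) (hM2 : Mᴴ * M = 1) :
    (Matrix.trace (Matrix.diagonal (fun p : Fin n => ((pad r σ ↑p : ℝ) : ℂ)) * M *
        Matrix.diagonal (fun q : Fin n => ((pad s τ ↑q : ℝ) : ℂ)) * Mᴴ)).re
      ≤ ∑ k ∈ Finset.range n, pad r σ k * pad s τ k := by
  have han : pad r σ n = 0 := by simp [pad, Nat.not_lt.2 hrn]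
  have hbn : pad s τ n = 0 := by simp [pad, Nat.not_lt.2 hsn]
  set P : ℕ → ℕ → ℝ := fun i j => ‖natEmb M i j‖^2 with hPdef
  have hP0 : ∀ i j, 0 ≤ P i j := by intro i j; positivity
  have hrow : ∀ i, i < n → ∑ j ∈ Finset.range n, P i j ≤ 1 :=
    fun i _ => natEmb_row_sum M hM1 i n
  have hcol : ∀ j, j < n → ∑ i ∈ Finset.range n, P i j ≤ 1 :=
    fun j _ => natEmb_col_sum M hM2 j n
  have hlemA := lemA n (pad r σ) (pad s τ) ha0 hb0 ha1 hb1 han hbn P hP0 hrow hcol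
  rw [trace_DMD]
  have hterm : ∀ p q : Fin n, pad r σ ↑p * pad s τ ↑q * ‖M p q‖^2
      = pad r σ ↑p * pad s τ ↑q * P ↑p ↑q := by
    intro p q
    rw [hPdef]
    simp only
    rw [natEmb_diag M p q]
  simp_rw [hterm]
  rw [fin_double_sum n (fun i j => pad r σ i * pad s τ j * P i j)]
  exact hlemA
end Part6

section Part7
open Finset Matrix Complex

lemma Icc_to_range (r : ℕ) (g : ℕ → ℝ) :
    ∑ j ∈ Finset.Icc 1 r, g j = ∑ k ∈ Finset.range r, g (k+1) := by
  rw [← Finset.Ico_add_one_right_eq_Icc, Finset.sum_Ico_eq_sum_range]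
  simp [Nat.add_comm]

lemma range_to_Icc {r n : ℕ} (hrn : r ≤ n) (f : ℕ → ℝ) (g : ℕ → ℝ)
    (hg : ∀ k, k < r → f k = g (k+1)) (hf0 : ∀ k, r ≤ k → f k = 0) :
    ∑ k ∈ Finset.range n, f k = ∑ j ∈ Finset.Icc 1 r, g j := by
  rw [Icc_to_range]
  rw [← Finset.sum_subset (Finset.range_subset_range.2 hrn)]
  · exact Finset.sum_congr rfl fun k hk => hg k (Finset.mem_range.1 hk)
  · intro k _ hk
    exact hf0 k (Nat.not_lt.1 fun h => hk (Finset.mem_range.2 h))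

lemma prod_unitary1 {d : ℕ} (X Y : Matrix (Fin d) (Fin d) ℂ)
    (hX : Xᴴ * X = 1) (hY : Y * Yᴴ = 1) : (Xᴴ * Y) * (Xᴴ * Y)ᴴ = 1 := by
  rw [Matrix.conjTranspose_mul, Matrix.conjTranspose_conjTranspose]
  calc Xᴴ * Y * (Yᴴ * X) = Xᴴ * (Y * Yᴴ) * X := by simp only [Matrix.mul_assoc]
    _ = 1 := by rw [hY, Matrix.mul_one, hX]

lemma prod_unitary2 {d : ℕ} (X Y : Matrix (Fin d) (Fin d) ℂ)
    (hX : X * Xᴴ = 1) (hY : Yᴴ * Y = 1) : (Xᴴ * Y)ᴴ * (Xᴴ * Y) = 1 := by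
  rw [Matrix.conjTranspose_mul, Matrix.conjTranspose_conjTranspose]
  calc Yᴴ * X * (Xᴴ * Y) = Yᴴ * (X * Xᴴ) * Y := by simp only [Matrix.mul_assoc]
    _ = 1 := by rw [hX, Matrix.mul_one, hY]

end Part7

theorem sharp_lower_bound_positive_factor
    (m n r s : ℕ) (hm : 0 < m) (hn : 0 < n) (hrs : r ≤ s) (hsmn : s ≤ min m n)
    (A E At : Matrix (Fin m) (Fin n) ℂ) (hAt : At = A + E)
    (σ τ : ℕ → ℝ) (hσ : SingVals r σ) (hτ : SingVals s τ)
    (hA : HasSVD A r σ) (hAtilde : HasSVD At s τ)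
    (hrankA : A.rank = r) (hrankAt : At.rank = s)
    (F G : ℝ)
    (hF : F = ∑ j ∈ Finset.Icc 1 r, σ j ^ 2 + ∑ j ∈ Finset.Icc 1 s, τ j ^ 2)
    (hG : G = ∑ j ∈ Finset.Icc 1 r, σ j * τ j) :
    frob (absMat A - absMat At) ≥
      Real.sqrt ((F - 2 * G) / (F + 2 * G)) * frob E := by
  open Finset Matrix Complex in
  have hsm : s ≤ m := le_trans hsmn (min_le_left _ _)
  have hsn : s ≤ n := le_trans hsmn (min_le_right _ _)
  have hrm : r ≤ m := le_trans hrs hsm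
  have hrn : r ≤ n := le_trans hrs hsn
  obtain ⟨U, V, hU1, hU2, hV1, hV2, hAeq⟩ := hA
  obtain ⟨U', V', hU1', hU2', hV1', hV2', hAteq⟩ := hAtilde
  -- pad properties
  have ha0 : ∀ k, 0 ≤ pad r σ k := by
    intro k; rw [pad]
    split
    · exact le_of_lt (hσ.1 (k+1) (Nat.le_add_left _ _) (by omega))
    · exact le_refl 0
  have hb0 : ∀ k, 0 ≤ pad s τ k := by
    intro k; rw [pad]
    split
    · exact le_of_lt (hτ.1 (k+1) (Nat.le_add_left _ _) (by omega))
    · exact le_refl 0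
  have ha1 : ∀ k, pad r σ (k+1) ≤ pad r σ k := by
    intro k
    by_cases h1 : k + 1 < r
    · rw [pad, pad, if_pos h1, if_pos (by omega)]
      exact hσ.2 (k+1) (by omega) h1
    · rw [pad, if_neg h1]
      exact ha0 k
  have hb1 : ∀ k, pad s τ (k+1) ≤ pad s τ k := by
    intro k
    by_cases h1 : k + 1 < s
    · rw [pad, pad, if_pos h1, if_pos (by omega)]
      exact hτ.2 (k+1) (by omega) h1
    · rw [pad, if_neg h1]
      exact hb0 k
  -- sums in terms of pads
  have hSa : ∑ k ∈ Finset.range n, (pad r σ k)^2 = ∑ j ∈ Finset.Icc 1 r, σ j ^ 2 := by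
    apply range_to_Icc hrn
    · intro k hk; rw [pad, if_pos hk]
    · intro k hk; rw [pad, if_neg (Nat.not_lt.2 hk)]; ring
  have hSb : ∑ k ∈ Finset.range n, (pad s τ k)^2 = ∑ j ∈ Finset.Icc 1 s, τ j ^ 2 := by
    apply range_to_Icc hsn
    · intro k hk; rw [pad, if_pos hk]
    · intro k hk; rw [pad, if_neg (Nat.not_lt.2 hk)]; ring
  have hSab : ∑ k ∈ Finset.range n, pad r σ k * pad s τ k = G := by
    rw [hG]
    apply range_to_Icc hrn
    · intro k hk
      rw [pad, pad, if_pos hk, if_pos (lt_of_lt_of_le hk hrs)]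
    · intro k hk; rw [pad, if_neg (Nat.not_lt.2 hk)]; ring
  -- nonnegativity of F ± 2G
  have hFm2G : F - 2*G = ∑ k ∈ Finset.range n, (pad r σ k - pad s τ k)^2 := by
    have : ∀ k ∈ Finset.range n, (pad r σ k - pad s τ k)^2
        = (pad r σ k)^2 + (pad s τ k)^2 - 2 * (pad r σ k * pad s τ k) := by
      intro k _; ring
    rw [Finset.sum_congr rfl this, Finset.sum_sub_distrib, Finset.sum_add_distrib,
      hSa, hSb, ← Finset.mul_sum, hSab, hF]
  have hFp2G : F + 2*G = ∑ k ∈ Finset.range n, (pad r σ k + pad s τ k)^2 := by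
    have : ∀ k ∈ Finset.range n, (pad r σ k + pad s τ k)^2
        = (pad r σ k)^2 + (pad s τ k)^2 + 2 * (pad r σ k * pad s τ k) := by
      intro k _; ring
    rw [Finset.sum_congr rfl this, Finset.sum_add_distrib, Finset.sum_add_distrib,
      hSa, hSb, ← Finset.mul_sum, hSab, hF]
  have hFm2G0 : 0 ≤ F - 2*G := by
    rw [hFm2G]; positivity
  have hFp2G0 : 0 ≤ F + 2*G := by
    rw [hFp2G]; positivity
  -- sum of squares of A, At
  have hsumA : ∑ i, ∑ j, ‖A i j‖^2 = ∑ j ∈ Finset.Icc 1 r, σ j ^ 2 := by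
    rw [← sumSq_eq_trace, trace_conj_re hrm hrn σ A U V hU1 hV1 hAeq, hSa]
  have hsumAt : ∑ i, ∑ j, ‖At i j‖^2 = ∑ j ∈ Finset.Icc 1 s, τ j ^ 2 := by
    rw [← sumSq_eq_trace, trace_conj_re hsm hsn τ At U' V' hU1' hV1' hAteq, hSb]
  -- cross trace lower bound
  have hcrossEq : Matrix.trace (Aᴴ * At)
      = Matrix.trace ((svdMat m n r σ)ᴴ * (Uᴴ * U') * svdMat m n s τ * (Vᴴ * V')ᴴ) := by
    rw [hAeq, hAteq]
    have h1 : (U * svdMat m n r σ * Vᴴ)ᴴ * (U' * svdMat m n s τ * V'ᴴ)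
        = V * ((svdMat m n r σ)ᴴ * (Uᴴ * (U' * (svdMat m n s τ * V'ᴴ)))) := by
      simp only [Matrix.conjTranspose_mul, Matrix.conjTranspose_conjTranspose,
        Matrix.mul_assoc]
    rw [h1, Matrix.trace_mul_comm]
    congr 1
    simp only [Matrix.conjTranspose_mul, Matrix.conjTranspose_conjTranspose,
      Matrix.mul_assoc]
  have hcross : -G ≤ (Matrix.trace (Aᴴ * At)).re := by
    rw [hcrossEq, ← hSab]
    exact cross_trace_lb hrm hsm hrn hsn σ τ ha0 ha1 hb0 hb1 (Uᴴ * U') (Vᴴ * V')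
      (prod_unitary1 U U' hU1 hU2') (prod_unitary2 U U' hU2 hU1')
      (prod_unitary1 V V' hV1 hV2') (prod_unitary2 V V' hV2 hV1')
  -- key1 : sumSq E ≤ F + 2G
  have hEeq : A - At = -E := by rw [hAt]; abel
  have hsumE : ∑ i, ∑ j, ‖E i j‖^2 = ∑ i, ∑ j, ‖(A - At) i j‖^2 := by
    apply Finset.sum_congr rfl; intro i _
    apply Finset.sum_congr rfl; intro j _
    rw [hEeq, Matrix.neg_apply, norm_neg]
  have key1 : ∑ i, ∑ j, ‖E i j‖^2 ≤ F + 2*G := by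
    rw [hsumE, sumSq_sub A At, hsumA, hsumAt, hF]
    linarith [hcross]
  -- absMat identifications
  have hH := absMat_eq hrm σ ha0 A U V hU1 hV1 hAeq
  have hHt := absMat_eq hsm τ hb0 At U' V' hU1' hV1' hAteq
  -- trace (H * Ht) upper bound
  have hHtraceEq : Matrix.trace (absMat A * absMat At)
      = Matrix.trace (Matrix.diagonal (fun p : Fin n => ((pad r σ ↑p : ℝ) : ℂ)) * (Vᴴ * V') *
          Matrix.diagonal (fun q : Fin n => ((pad s τ ↑q : ℝ) : ℂ)) * (Vᴴ * V')ᴴ) := by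
    rw [hH, hHt]
    have h1 : V * Matrix.diagonal (fun p : Fin n => ((pad r σ ↑p : ℝ) : ℂ)) * Vᴴ *
        (V' * Matrix.diagonal (fun q : Fin n => ((pad s τ ↑q : ℝ) : ℂ)) * V'ᴴ)
        = V * (Matrix.diagonal (fun p : Fin n => ((pad r σ ↑p : ℝ) : ℂ)) *
            (Vᴴ * (V' * (Matrix.diagonal (fun q : Fin n => ((pad s τ ↑q : ℝ) : ℂ)) * V'ᴴ)))) := by
      simp only [Matrix.mul_assoc]
    rw [h1, Matrix.trace_mul_comm]
    congr 1
    simp only [Matrix.conjTranspose_mul, Matrix.conjTranspose_conjTranspose,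
      Matrix.mul_assoc]
  have hHerm : (absMat A)ᴴ = absMat A :=
    absMat_herm A
  have hHtrace : (Matrix.trace ((absMat A)ᴴ * absMat At)).re ≤ G := by
    rw [hHerm, hHtraceEq, ← hSab]
    exact herm_trace_ub hrn hsn σ τ ha0 ha1 hb0 hb1 (Vᴴ * V')
      (prod_unitary1 V V' hV1 hV2') (prod_unitary2 V V' hV2 hV1')
  -- key2
  have key2 : F - 2*G ≤ ∑ i, ∑ j, ‖(absMat A - absMat At) i j‖^2 := by
    rw [sumSq_sub (absMat A) (absMat At)]
    rw [sumSq_absMat A, sumSq_absMat At,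
      trace_conj_re hrm hrn σ A U V hU1 hV1 hAeq,
      trace_conj_re hsm hsn τ At U' V' hU1' hV1' hAteq, hSa, hSb, hF]
    linarith [hHtrace]
  -- final computation
  rw [ge_iff_le, frob, frob]
  rw [← Real.sqrt_mul (div_nonneg hFm2G0 hFp2G0)]
  apply Real.sqrt_le_sqrt
  rcases eq_or_lt_of_le hFp2G0 with h0 | hpos
  · rw [← h0, div_zero, zero_mul]
    linarith [key2, hFm2G0]
  · calc (F - 2*G)/(F + 2*G) * (∑ i, ∑ j, ‖E i j‖^2)
        ≤ (F - 2*G)/(F + 2*G) * (F + 2*G) := by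
          apply mul_le_mul_of_nonneg_left key1 (div_nonneg hFm2G0 hFp2G0)
      _ = F - 2*G := div_mul_cancel₀ _ (ne_of_gt hpos)
      _ ≤ _ := key2
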